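/- Let α ∈ [0, 1/2] and let X_1, …, X_m be i.i.d. random variables with P(X_k = 1) = α, P(X_k = −1) = α, and P(X_k = 0) = 1 − 2α. Let Y = Σ_{k=1}^m X_k. Then for every positive integer r: E[Y^r] = 0 if r is odd, and E[Y^r] ≤ 2α·(rm)^{r/2} if r is even. -/

import Mathlib

set_option autoImplicit false

open MeasureTheory ProbabilityTheory

namespace ThreePointAux

open Finset

section Rank

variable {α : Type*} [LinearOrder α]

lemma rank_lt_card {s : Finset α} {i : α} (hi : i ∈ s) :
    (s.filter (fun j => j < i)).card < s.card := by
  refine card_lt_card ⟨filter_subset _ _, fun hsub => ?_⟩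
  have := hsub hi
  simp at this

lemma rank_lt_rank {s : Finset α} {i j : α} (hi : i ∈ s) (hij : i < j) :
    (s.filter (fun x => x < i)).card < (s.filter (fun x => x < j)).card := by
  refine card_lt_card ⟨fun x hx => ?_, fun hsub => ?_⟩
  · simp only [mem_filter] at hx ⊢
    exact ⟨hx.1, hx.2.trans hij⟩
  · have := hsub (mem_filter.mpr ⟨hi, hij⟩)
    simp at this

lemma rank_injOn {s : Finset α} {i j : α} (hi : i ∈ s) (hj : j ∈ s)
    (h : (s.filter (fun x => x < i)).card = (s.filter (fun x => x < j)).card) : i = j := by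
  rcases lt_trichotomy i j with hl | he | hl
  · exact absurd h (Nat.ne_of_lt (rank_lt_rank hi hl))
  · exact he
  · exact absurd h.symm (Nat.ne_of_lt (rank_lt_rank hj hl))

lemma rank_existsUnique (s : Finset α) {t : ℕ} (ht : t < s.card) :
    ∃! i, i ∈ s ∧ (s.filter (fun j => j < i)).card = t := by
  let F : ↥s → Fin s.card := fun i => ⟨(s.filter (fun j => j < (i : α))).card, rank_lt_card i.2⟩
  have hFinj : Function.Injective F := fun a b hab =>
    Subtype.ext (rank_injOn a.2 b.2 (congrArg Fin.val hab))
  have hFbij : Function.Bijective F :=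
    (Fintype.bijective_iff_injective_and_card F).2 ⟨hFinj, by simp⟩
  obtain ⟨⟨i, hi⟩, hFi⟩ := hFbij.2 ⟨t, ht⟩
  exact ⟨i, ⟨hi, congrArg Fin.val hFi⟩, fun j hj =>
    rank_injOn hj.1 hi (hj.2.trans (congrArg Fin.val hFi).symm)⟩

noncomputable def nthEl (s : Finset α) (t : ℕ) (d : α) : α :=
  letI := Classical.propDecidable (∃! i, i ∈ s ∧ (s.filter (fun j => j < i)).card = t)
  if h : (∃! i, i ∈ s ∧ (s.filter (fun j => j < i)).card = t) then h.exists.choose else d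

lemma nthEl_spec {s : Finset α} {t : ℕ} (ht : t < s.card) (d : α) :
    nthEl s t d ∈ s ∧ (s.filter (fun j => j < nthEl s t d)).card = t := by
  have h := rank_existsUnique s ht
  rw [nthEl]
  rw [dif_pos h]
  exact h.exists.choose_spec

lemma nthEl_unique {s : Finset α} {t : ℕ} (ht : t < s.card) (d : α)
    {j : α} (hj : j ∈ s) (hjt : (s.filter (fun x => x < j)).card = t) : j = nthEl s t d := by
  obtain ⟨i, hi, huniq⟩ := rank_existsUnique s ht
  have h1 := huniq j ⟨hj, hjt⟩
  have h2 := huniq _ (nthEl_spec ht d)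
  rw [h1, h2]

end Rank

section Fib

variable {r m : ℕ}

def fib (f : Fin r → Fin m) (k : Fin m) : Finset (Fin r) := univ.filter (fun i => f i = k)

def idx (f : Fin r → Fin m) (i : Fin r) : ℕ := ((fib f (f i)).filter (fun j => j < i)).card

lemma mem_fib_self (f : Fin r → Fin m) (i : Fin r) : i ∈ fib f (f i) :=
  mem_filter.mpr ⟨mem_univ _, rfl⟩

lemma eq_of_mem_fib {f : Fin r → Fin m} {k : Fin m} {j : Fin r} (h : j ∈ fib f k) : f j = k :=
  (mem_filter.mp h).2

lemma idx_lt (f : Fin r → Fin m) (i : Fin r) : idx f i < (fib f (f i)).card :=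
  rank_lt_card (mem_fib_self f i)

lemma idx_eq_rank {f : Fin r → Fin m} {k : Fin m} {j : Fin r} (h : j ∈ fib f k) :
    idx f j = ((fib f k).filter (fun x => x < j)).card := by
  rw [idx, eq_of_mem_fib h]

noncomputable def pt (f : Fin r → Fin m) (i : Fin r) : Fin r :=
  nthEl (fib f (f i)) (idx f i - 1) i

noncomputable def up (f : Fin r → Fin m) (i : Fin r) : Fin r :=
  nthEl (fib f (f i)) (idx f i + 1) i

lemma pt_spec (f : Fin r → Fin m) (i : Fin r) :
    f (pt f i) = f i ∧ idx f (pt f i) = idx f i - 1 := by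
  have ht : idx f i - 1 < (fib f (f i)).card := lt_of_le_of_lt (Nat.sub_le _ _) (idx_lt f i)
  have h := nthEl_spec ht i
  rw [pt]
  exact ⟨eq_of_mem_fib h.1, by rw [idx_eq_rank h.1]; exact h.2⟩

lemma up_spec {f : Fin r → Fin m} {i : Fin r} (hev : Even ((fib f (f i)).card))
    (hei : Even (idx f i)) : f (up f i) = f i ∧ idx f (up f i) = idx f i + 1 := by
  have h1 := idx_lt f i
  rw [Nat.even_iff] at hev hei
  have ht : idx f i + 1 < (fib f (f i)).card := by omega
  have h := nthEl_spec ht i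
  rw [up]
  exact ⟨eq_of_mem_fib h.1, by rw [idx_eq_rank h.1]; exact h.2⟩

lemma pt_up {f : Fin r → Fin m} {i : Fin r} (hev : Even ((fib f (f i)).card))
    (hei : Even (idx f i)) : pt f (up f i) = i := by
  obtain ⟨hfu, hiu⟩ := up_spec hev hei
  have heq : pt f (up f i) = nthEl (fib f (f i)) (idx f i) (up f i) := by
    rw [pt, hfu, hiu, Nat.add_sub_cancel]
  rw [heq]
  exact (nthEl_unique (idx_lt f i) _ (mem_fib_self f i) (idx_eq_rank (mem_fib_self f i)).symm).symm

lemma up_pt {f : Fin r → Fin m} {c : Fin r} (hoc : ¬ Even (idx f c)) : up f (pt f c) = c := by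
  obtain ⟨hfp, hip⟩ := pt_spec f c
  have h0 : 1 ≤ idx f c := by rw [Nat.even_iff] at hoc; omega
  have heq : up f (pt f c) = nthEl (fib f (f c)) (idx f c) (pt f c) := by
    rw [up, hfp, hip, Nat.sub_add_cancel h0]
  rw [heq]
  exact (nthEl_unique (idx_lt f c) _ (mem_fib_self f c) (idx_eq_rank (mem_fib_self f c)).symm).symm

def closers (f : Fin r → Fin m) : Finset (Fin r) := univ.filter (fun i => ¬ Even (idx f i))

lemma card_closers {f : Fin r → Fin m} (hev : ∀ k, Even ((fib f k).card)) :
    2 * (closers f).card = r := by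
  have h1 : (univ.filter (fun i => Even (idx f i))).card + (closers f).card = r := by
    rw [closers, card_filter_add_card_filter_not]
    simp
  have h2 : (univ.filter (fun i => Even (idx f i))).card = (closers f).card := by
    refine card_bij' (fun i _ => up f i) (fun c _ => pt f c) ?_ ?_ ?_ ?_
    · intro i hi
      simp only [mem_filter, mem_univ, true_and] at hi ⊢
      rw [closers, mem_filter]
      obtain ⟨h1, h2⟩ := up_spec (hev (f i)) hi
      refine ⟨mem_univ _, ?_⟩
      rw [h2]
      simp [Nat.even_add_one, hi]
    · intro c hc
      rw [closers, mem_filter] at hc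
      simp only [mem_filter, mem_univ, true_and]
      obtain ⟨h1, h2⟩ := pt_spec f c
      rw [h2]
      rw [Nat.even_iff] at hc ⊢
      omega
    · intro i hi
      simp only [mem_filter, mem_univ, true_and] at hi
      exact pt_up (hev (f i)) hi
    · intro c hc
      rw [closers, mem_filter] at hc
      exact up_pt hc.2
  omega

end Fib


lemma card_even_fibers_le (r m n : ℕ) (hrn : r = 2 * n) :
    ((univ : Finset (Fin r → Fin m)).filter (fun f =>
      ∀ k, Even ((univ.filter (fun i => f i = k)).card))).card ≤ (r * m) ^ n := by
  classical
  have hrange : ∀ t : Fin n, (t : ℕ) < r := fun t => lt_of_lt_of_le t.2 (by omega)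
  set G : (Fin r → Fin m) → (Fin n → Fin r × Fin m) := fun f t =>
    (pt f (nthEl (closers f) t ⟨t, hrange t⟩), f (nthEl (closers f) t ⟨t, hrange t⟩)) with hG
  have hcard : ∀ {f : Fin r → Fin m}, (∀ k, Even ((fib f k).card)) → (closers f).card = n := by
    intro f hev; have := card_closers hev; omega
  -- characterization of "openers" via the first components of G
  have hopen : ∀ (f : Fin r → Fin m), (∀ k, Even ((fib f k).card)) → ∀ i : Fin r,
      (Even (idx f i) ↔ ∃ t : Fin n, (G f t).1 = i) := by
    intro f hev i
    constructor
    · intro hei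
      have hup : up f i ∈ closers f := by
        rw [closers, mem_filter]
        obtain ⟨h1, h2⟩ := up_spec (hev (f i)) hei
        refine ⟨mem_univ _, ?_⟩
        rw [h2]; simp [Nat.even_add_one, hei]
      have hs : ((closers f).filter (fun x => x < up f i)).card < (closers f).card :=
        rank_lt_card hup
      have hsn : ((closers f).filter (fun x => x < up f i)).card < n := by
        rw [← hcard hev]; exact hs
      refine ⟨⟨_, hsn⟩, ?_⟩
      have hnth : nthEl (closers f) ((closers f).filter (fun x => x < up f i)).card
          ⟨((closers f).filter (fun x => x < up f i)).card, hrange ⟨_, hsn⟩⟩ = up f i :=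
        (nthEl_unique hs _ hup rfl).symm
      simp only [hG]
      rw [hnth]
      exact pt_up (hev (f i)) hei
    · rintro ⟨t, ht⟩
      have htc : (t : ℕ) < (closers f).card := by rw [hcard hev]; exact t.2
      have h1 := (nthEl_spec htc (⟨t, hrange t⟩ : Fin r)).1
      have h2 : ¬ Even (idx f (nthEl (closers f) t ⟨t, hrange t⟩)) := by
        have := (mem_filter.mp (show nthEl (closers f) t ⟨t, hrange t⟩ ∈
          univ.filter (fun i => ¬ Even (idx f i)) from h1)).2
        exact this
      simp only [hG] at ht
      obtain ⟨hfp, hip⟩ := pt_spec f (nthEl (closers f) t ⟨t, hrange t⟩)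
      rw [← ht, hip]
      rw [Nat.even_iff] at h2 ⊢
      omega
  have hbound : ((univ : Finset (Fin n → Fin r × Fin m))).card = (r * m) ^ n := by
    rw [card_univ]
    simp [Fintype.card_fun, Fintype.card_prod]
  rw [← hbound]
  refine card_le_card_of_injOn G (fun f _ => mem_univ _) ?_
  intro f hf f' hf' hGG
  simp only [coe_filter, Set.mem_setOf_eq, mem_univ, true_and] at hf hf'
  have hev : ∀ k, Even ((fib f k).card) := hf
  have hev' : ∀ k, Even ((fib f' k).card) := hf'
  have hopeneq : ∀ i : Fin r, Even (idx f i) ↔ Even (idx f' i) := by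
    intro i
    rw [hopen f hev i, hopen f' hev' i, hGG]
  have hC : closers f = closers f' := by
    ext i
    simp only [closers, mem_filter, mem_univ, true_and]
    exact not_congr (hopeneq i)
  funext i
  rcases Nat.even_or_odd (idx f i) with hei | hoi
  · -- opener case
    obtain ⟨t, ht⟩ := (hopen f hev i).1 hei
    have ht' : (G f' t).1 = i := by rw [← hGG]; exact ht
    have e1 : f ((G f t).1) = (G f t).2 := by
      simp only [hG]
      exact (pt_spec f _).1
    have e2 : f' ((G f' t).1) = (G f' t).2 := by
      simp only [hG]
      exact (pt_spec f' _).1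
    rw [ht] at e1; rw [ht'] at e2
    rw [e1, e2, hGG]
  · -- closer case
    have hic : i ∈ closers f := by
      rw [closers, mem_filter]
      exact ⟨mem_univ _, Nat.not_even_iff_odd.mpr hoi⟩
    have hic' : i ∈ closers f' := hC ▸ hic
    have hs : ((closers f).filter (fun x => x < i)).card < (closers f).card := rank_lt_card hic
    have hsn : ((closers f).filter (fun x => x < i)).card < n := by rw [← hcard hev]; exact hs
    set t : Fin n := ⟨_, hsn⟩ with htdef
    have hnth : nthEl (closers f) (t : ℕ) (⟨(t : ℕ), hrange t⟩ : Fin r) = i :=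
      (nthEl_unique hs _ hic rfl).symm
    have hnth' : nthEl (closers f') (t : ℕ) (⟨(t : ℕ), hrange t⟩ : Fin r) = i := by
      refine (nthEl_unique (show (t : ℕ) < (closers f').card by rw [← hC]; exact hs) _ hic'
        (show ((closers f').filter (fun x => x < i)).card = (t : ℕ) by rw [← hC])).symm
    have e1 : (G f t).2 = f i := by simp only [hG]; rw [hnth]
    have e2 : (G f' t).2 = f' i := by simp only [hG]; rw [hnth']
    rw [← e1, ← e2, hGG]

end ThreePointAux

/-- Claim D.4 (moments of a sum of i.i.d. symmetric three-point variables). -/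
theorem three_point_sum_moments
    {Ω : Type*} [MeasurableSpace Ω] (μ : Measure Ω) [IsProbabilityMeasure μ]
    (m : ℕ) (hm : 0 < m) (α : ℝ) (hα : α ∈ Set.Icc (0 : ℝ) (1 / 2))
    (X : Fin m → Ω → ℝ)
    (hmeas : ∀ k, Measurable (X k))
    (hindep : iIndepFun X μ)
    (hone : ∀ k, μ {ω | X k ω = 1} = ENNReal.ofReal α)
    (hmone : ∀ k, μ {ω | X k ω = -1} = ENNReal.ofReal α)
    (hzero : ∀ k, μ {ω | X k ω = 0} = ENNReal.ofReal (1 - 2 * α))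
    (Y : Ω → ℝ) (hY : ∀ ω, Y ω = ∑ k, X k ω)
    (r : ℕ) (hr : 0 < r) :
    (Odd r → ∫ ω, (Y ω) ^ r ∂μ = 0)
    ∧ (Even r → ∫ ω, (Y ω) ^ r ∂μ ≤ 2 * α * ((r * m : ℕ) : ℝ) ^ (r / 2)) := by
  obtain ⟨hα0, hα2⟩ := hα
  -- measurable sets
  have hA : ∀ k, MeasurableSet {ω | X k ω = (1:ℝ)} := fun k => hmeas k (measurableSet_singleton 1)
  have hB : ∀ k, MeasurableSet {ω | X k ω = (-1:ℝ)} :=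
    fun k => hmeas k (measurableSet_singleton (-1))
  have hC : ∀ k, MeasurableSet {ω | X k ω = (0:ℝ)} := fun k => hmeas k (measurableSet_singleton 0)
  -- a.e. trichotomy
  have htri : ∀ᵐ ω ∂μ, ∀ k, X k ω = 1 ∨ X k ω = -1 ∨ X k ω = 0 := by
    rw [ae_all_iff]
    intro k
    have hd1 : Disjoint {ω | X k ω = (1:ℝ)} {ω | X k ω = (-1:ℝ)} := by
      rw [Set.disjoint_left]
      intro ω h1 h2
      simp only [Set.mem_setOf_eq] at h1 h2
      norm_num [h1] at h2
    have hd2 : Disjoint ({ω | X k ω = (1:ℝ)} ∪ {ω | X k ω = (-1:ℝ)}) {ω | X k ω = (0:ℝ)} := by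
      rw [Set.disjoint_left]
      intro ω h1 h2
      simp only [Set.mem_union, Set.mem_setOf_eq] at h1 h2
      rcases h1 with h | h <;> rw [h2] at h <;> norm_num at h
    have hmeasU : μ ({ω | X k ω = (1:ℝ)} ∪ {ω | X k ω = (-1:ℝ)} ∪ {ω | X k ω = (0:ℝ)}) = 1 := by
      rw [measure_union hd2 (hC k), measure_union hd1 (hB k), hone k, hmone k, hzero k,
        ← ENNReal.ofReal_add hα0 hα0, ← ENNReal.ofReal_add (by linarith) (by linarith),
        show α + α + (1 - 2 * α) = 1 by ring, ENNReal.ofReal_one]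
    have hcompl : μ ({ω | X k ω = (1:ℝ)} ∪ {ω | X k ω = (-1:ℝ)} ∪ {ω | X k ω = (0:ℝ)})ᶜ = 0 := by
      rw [measure_compl (((hA k).union (hB k)).union (hC k)) (measure_ne_top μ _), hmeasU,
        measure_univ, tsub_self]
    refine ae_iff.mpr (measure_mono_null (fun ω hω => ?_) hcompl)
    simp only [Set.mem_setOf_eq] at hω
    simp only [Set.mem_compl_iff, Set.mem_union, Set.mem_setOf_eq]
    tauto
  -- integrability
  have haes : ∀ (c : Fin m → ℕ), AEStronglyMeasurable (fun ω => ∏ k, (X k ω) ^ (c k)) μ :=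
    fun c => (Finset.measurable_prod Finset.univ
      (fun k _ => (hmeas k).pow_const (c k))).aestronglyMeasurable
  have hint : ∀ (c : Fin m → ℕ), Integrable (fun ω => ∏ k, (X k ω) ^ (c k)) μ := by
    intro c
    refine Integrable.mono' (integrable_const 1) (haes c) ?_
    filter_upwards [htri] with ω hω
    rw [Real.norm_eq_abs, Finset.abs_prod]
    refine Finset.prod_le_one (fun k _ => abs_nonneg _) (fun k _ => ?_)
    rw [abs_pow]
    refine pow_le_one₀ (abs_nonneg _) ?_
    rcases hω k with h | h | h <;> rw [h] <;> norm_num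
  have hint1 : ∀ (k : Fin m) (s : ℕ), Integrable (fun ω => (X k ω) ^ s) μ := by
    intro k s
    refine Integrable.mono' (integrable_const 1) ((hmeas k).pow_const s).aestronglyMeasurable ?_
    filter_upwards [htri] with ω hω
    rw [Real.norm_eq_abs, abs_pow]
    refine pow_le_one₀ (abs_nonneg _) ?_
    rcases hω k with h | h | h <;> rw [h] <;> norm_num
  -- moments of a single variable
  have hmom : ∀ (k : Fin m) (s : ℕ), 0 < s →
      ∫ ω, (X k ω) ^ s ∂μ = α + (-1:ℝ)^s * α := by
    intro k s hs
    have hcong : (fun ω => (X k ω) ^ s) =ᵐ[μ]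
        (fun ω => Set.indicator {ω | X k ω = (1:ℝ)} (fun _ => (1:ℝ)) ω
          + (-1:ℝ)^s * Set.indicator {ω | X k ω = (-1:ℝ)} (fun _ => (1:ℝ)) ω) := by
      filter_upwards [htri] with ω hω
      rcases hω k with h | h | h
      · rw [Set.indicator_of_mem (by exact h) (fun _ => (1:ℝ)),
          Set.indicator_of_notMem (by simp only [Set.mem_setOf_eq, h]; norm_num) (fun _ => (1:ℝ))]
        rw [h]
        norm_num
      · rw [Set.indicator_of_notMem (by simp only [Set.mem_setOf_eq, h]; norm_num)
            (fun _ => (1:ℝ)),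
          Set.indicator_of_mem (by exact h) (fun _ => (1:ℝ))]
        rw [h]
        ring
      · rw [Set.indicator_of_notMem (by simp only [Set.mem_setOf_eq, h]; norm_num)
            (fun _ => (1:ℝ)),
          Set.indicator_of_notMem (by simp only [Set.mem_setOf_eq, h]; norm_num)
            (fun _ => (1:ℝ))]
        rw [h, zero_pow hs.ne']
        ring
    rw [integral_congr_ae hcong, integral_add ((integrable_const (1:ℝ)).indicator (hA k))
      (((integrable_const (1:ℝ)).indicator (hB k)).const_mul _),
      integral_const_mul, integral_indicator_const (1:ℝ) (hA k),
      integral_indicator_const (1:ℝ) (hB k), measureReal_def, measureReal_def, hone k, hmone k, ENNReal.toReal_ofReal hα0]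
    simp
  -- product of independent moments
  have hprod : ∀ (c : Fin m → ℕ) (s : Finset (Fin m)),
      ∫ ω, ∏ k ∈ s, (X k ω) ^ (c k) ∂μ = ∏ k ∈ s, ∫ ω, (X k ω) ^ (c k) ∂μ := by
    intro c s
    induction s using Finset.induction_on with
    | empty => simp
    | @insert a s' ha ih =>
      have hpow : iIndepFun
          (fun k => (fun x : ℝ => x ^ (c k)) ∘ (X k)) μ :=
        hindep.comp _ (fun k => measurable_id.pow_const (c k))
      have hIF : IndepFun (∏ j ∈ s', fun ω => (X j ω) ^ (c j)) (fun ω => (X a ω) ^ (c a)) μ :=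
        hpow.indepFun_finsetProd_of_notMem (fun k => (hmeas k).pow_const (c k)) ha
      have hPm : Measurable (∏ j ∈ s', fun ω => (X j ω) ^ (c j)) := by
        rw [show (∏ j ∈ s', fun ω => (X j ω) ^ (c j)) = fun ω => ∏ j ∈ s', (X j ω) ^ (c j)
          from funext fun ω => Finset.prod_apply ω s' _]
        exact Finset.measurable_prod s' (fun j _ => (hmeas j).pow_const (c j))
      have hmul := hIF.symm.integral_mul_eq_mul_integral ((hmeas a).pow_const (c a)).aestronglyMeasurable
        hPm.aestronglyMeasurable
      simp only [Finset.prod_insert ha]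
      rw [← ih]
      calc ∫ ω, (X a ω) ^ (c a) * ∏ j ∈ s', (X j ω) ^ (c j) ∂μ
          = ∫ ω, ((fun ω => (X a ω) ^ (c a)) * (∏ j ∈ s', fun ω => (X j ω) ^ (c j))) ω ∂μ := by
            refine integral_congr_ae (Filter.Eventually.of_forall (fun ω => ?_))
            simp [Finset.prod_apply]
        _ = (∫ ω, (X a ω) ^ (c a) ∂μ) *
              ∫ ω, (∏ j ∈ s', fun ω => (X j ω) ^ (c j)) ω ∂μ := hmul
        _ = (∫ ω, (X a ω) ^ (c a) ∂μ) * ∫ ω, ∏ j ∈ s', (X j ω) ^ (c j) ∂μ := by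
            congr 1
            refine integral_congr_ae (Filter.Eventually.of_forall (fun ω => ?_))
            simp [Finset.prod_apply]
  -- fiberwise rewriting of the product
  have hfib : ∀ (p : Fin r → Fin m) (ω : Ω), ∏ i, X (p i) ω
      = ∏ k, (X k ω) ^ ((Finset.univ.filter (fun i => p i = k)).card) := by
    intro p ω
    rw [← Finset.prod_fiberwise_of_maps_to (fun i _ => Finset.mem_univ (p i))
      (fun i => X (p i) ω)]
    refine Finset.prod_congr rfl (fun k _ => ?_)
    rw [Finset.prod_congr rfl
      (fun i hi => by rw [(Finset.mem_filter.mp hi).2] :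
        ∀ i ∈ Finset.univ.filter (fun i => p i = k), X (p i) ω = X k ω),
      Finset.prod_const]
  -- main expansion
  have hexp : ∫ ω, (Y ω) ^ r ∂μ = ∑ p : Fin r → Fin m, ∏ k,
      ∫ ω, (X k ω) ^ ((Finset.univ.filter (fun i => p i = k)).card) ∂μ := by
    have h1 : (fun ω => (Y ω) ^ r) = fun ω => ∑ p : Fin r → Fin m,
        ∏ k, (X k ω) ^ ((Finset.univ.filter (fun i => p i = k)).card) := by
      funext ω
      rw [hY ω, Fintype.sum_pow]
      exact Finset.sum_congr rfl (fun p _ => hfib p ω)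
    rw [h1, integral_finset_sum _ (fun p _ => hint _)]
    exact Finset.sum_congr rfl (fun p _ => hprod _ Finset.univ)
  -- sum of fiber cardinalities
  have hsumc : ∀ p : Fin r → Fin m,
      ∑ k, (Finset.univ.filter (fun i => p i = k)).card = r := by
    intro p
    have := Finset.card_eq_sum_card_fiberwise
      (f := p) (s := Finset.univ) (t := Finset.univ) (fun i _ => Finset.mem_univ _)
    simpa using this.symm
  -- terms with some odd fiber vanish
  have hzero_term : ∀ p : Fin r → Fin m,
      (∃ k, ¬ Even ((Finset.univ.filter (fun i => p i = k)).card)) →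
      ∏ k, ∫ ω, (X k ω) ^ ((Finset.univ.filter (fun i => p i = k)).card) ∂μ = 0 := by
    rintro p ⟨k0, hk0⟩
    refine Finset.prod_eq_zero (Finset.mem_univ k0) ?_
    have hpos : 0 < (Finset.univ.filter (fun i => p i = k0)).card := by
      rcases Nat.eq_zero_or_pos ((Finset.univ.filter (fun i => p i = k0)).card) with h | h
      · rw [h] at hk0
        exact absurd Even.zero hk0
      · exact h
    rw [hmom k0 _ hpos, (Nat.not_even_iff_odd.mp hk0).neg_one_pow]
    ring
  constructor
  · -- odd case
    intro hodd
    rw [hexp]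
    refine Finset.sum_eq_zero (fun p _ => ?_)
    refine hzero_term p ?_
    by_contra h
    push_neg at h
    have heven : Even (∑ k, (Finset.univ.filter (fun i => p i = k)).card) :=
      Finset.even_sum _ (fun k _ => h k)
    rw [hsumc p] at heven
    exact (Nat.not_even_iff_odd.mpr hodd) heven
  · -- even case
    intro heven
    classical
    set n := r / 2 with hn
    have hrn : r = 2 * n := by
      rw [Nat.even_iff] at heven
      omega
    rw [hexp]
    have hsplit : ∑ p : Fin r → Fin m, ∏ k,
          ∫ ω, (X k ω) ^ ((Finset.univ.filter (fun i => p i = k)).card) ∂μ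
        = ∑ p ∈ Finset.univ.filter (fun p : Fin r → Fin m =>
            ∀ k, Even ((Finset.univ.filter (fun i => p i = k)).card)),
          ∏ k, ∫ ω, (X k ω) ^ ((Finset.univ.filter (fun i => p i = k)).card) ∂μ := by
      rw [← Finset.sum_filter_add_sum_filter_not Finset.univ
        (fun p : Fin r → Fin m => ∀ k, Even ((Finset.univ.filter (fun i => p i = k)).card))]
      have : ∑ p ∈ Finset.univ.filter (fun p : Fin r → Fin m =>
          ¬ ∀ k, Even ((Finset.univ.filter (fun i => p i = k)).card)),
          ∏ k, ∫ ω, (X k ω) ^ ((Finset.univ.filter (fun i => p i = k)).card) ∂μ = 0 := by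
        refine Finset.sum_eq_zero (fun p hp => ?_)
        rw [Finset.mem_filter] at hp
        push_neg at hp
        exact hzero_term p hp.2
      rw [this, add_zero]
    rw [hsplit]
    -- bound each term by 2α
    have hterm : ∀ p ∈ Finset.univ.filter (fun p : Fin r → Fin m =>
        ∀ k, Even ((Finset.univ.filter (fun i => p i = k)).card)),
        ∏ k, ∫ ω, (X k ω) ^ ((Finset.univ.filter (fun i => p i = k)).card) ∂μ ≤ 2 * α := by
      intro p hp
      rw [Finset.mem_filter] at hp
      have hpev := hp.2
      have hfac : ∀ k, ∫ ω, (X k ω) ^ ((Finset.univ.filter (fun i => p i = k)).card) ∂μ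
          = if (Finset.univ.filter (fun i => p i = k)).card = 0 then 1 else 2 * α := by
        intro k
        by_cases h : (Finset.univ.filter (fun i => p i = k)).card = 0
        · rw [if_pos h, h]
          simp
        · rw [if_neg h, hmom k _ (Nat.pos_of_ne_zero h), (hpev k).neg_one_pow]
          ring
      have hbd0 : ∀ k, (0:ℝ) ≤ if (Finset.univ.filter (fun i => p i = k)).card = 0
          then 1 else 2 * α := by
        intro k
        split <;> linarith
      have hbd1 : ∀ k, (if (Finset.univ.filter (fun i => p i = k)).card = 0
          then (1:ℝ) else 2 * α) ≤ 1 := by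
        intro k
        split
        · exact le_refl 1
        · linarith
      set k0 : Fin m := p ⟨0, hr⟩ with hk0
      have hk0c : (Finset.univ.filter (fun i => p i = k0)).card ≠ 0 :=
        Finset.card_ne_zero_of_mem
          (Finset.mem_filter.mpr ⟨Finset.mem_univ (⟨0, hr⟩ : Fin r), rfl⟩)
      calc ∏ k, ∫ ω, (X k ω) ^ ((Finset.univ.filter (fun i => p i = k)).card) ∂μ
          = ∏ k, if (Finset.univ.filter (fun i => p i = k)).card = 0 then 1 else 2 * α :=
            Finset.prod_congr rfl (fun k _ => hfac k)
        _ = (if (Finset.univ.filter (fun i => p i = k0)).card = 0 then 1 else 2 * α) *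
              ∏ k ∈ Finset.univ.erase k0,
                if (Finset.univ.filter (fun i => p i = k)).card = 0 then 1 else 2 * α :=
            (Finset.mul_prod_erase _ _ (Finset.mem_univ k0)).symm
        _ ≤ (2 * α) * 1 := by
            rw [if_neg hk0c]
            refine mul_le_mul_of_nonneg_left ?_ (by linarith)
            exact Finset.prod_le_one (fun k _ => hbd0 k) (fun k _ => hbd1 k)
        _ = 2 * α := mul_one _
    calc ∑ p ∈ Finset.univ.filter (fun p : Fin r → Fin m =>
            ∀ k, Even ((Finset.univ.filter (fun i => p i = k)).card)),
          ∏ k, ∫ ω, (X k ω) ^ ((Finset.univ.filter (fun i => p i = k)).card) ∂μ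
        ≤ (Finset.univ.filter (fun p : Fin r → Fin m =>
            ∀ k, Even ((Finset.univ.filter (fun i => p i = k)).card))).card • (2 * α) :=
          Finset.sum_le_card_nsmul _ _ _ hterm
      _ = ((Finset.univ.filter (fun p : Fin r → Fin m =>
            ∀ k, Even ((Finset.univ.filter (fun i => p i = k)).card))).card : ℝ) * (2 * α) := by
          rw [nsmul_eq_mul]
      _ ≤ (((r * m) ^ n : ℕ) : ℝ) * (2 * α) := by
          refine mul_le_mul_of_nonneg_right ?_ (by linarith)
          exact_mod_cast ThreePointAux.card_even_fibers_le r m n hrn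
      _ = 2 * α * ((r * m : ℕ) : ℝ) ^ (r / 2) := by
          push_cast
          rw [← hn]
          ring
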